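/- Let n ≥ 3 and let k ≥ 0 and D ≥ 1 be integers with 2^k ≤ D ≤ n − 2. Then for every ℓ with D ≤ ℓ ≤ n − 2, one has (x_{D+1} x_{D+2} ⋯ x_n) · x_ℓ^{2^k} = x_{D+1−2^k} x_{D+2−2^k} ⋯ x_n in R_n (independent of ℓ); consequently, if n − 1 − D is even, then (x_{D+1} ⋯ x_n) · ( x_D^{2^k} + x_{D+1}^{2^k} + ⋯ + x_{n−2}^{2^k} ) = 0 in R_n. -/

import Mathlib

open MvPolynomial Finset Fin.NatCast

noncomputable section

/-- The defining ideal of `R_n` (for `n ≥ 3`): generated by `x_1^2`, by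
`x_i^2 - x_{i-1} x_i` for `2 ≤ i ≤ n-1`, and by `x_n^2 - (x_1 + ⋯ + x_{n-2}) x_n`
(variables are 1-based; `X ((i-1 : ℕ) : Fin n)` is `x_i`). -/
def Rrel (n : ℕ) [NeZero n] : Ideal (MvPolynomial (Fin n) (ZMod 2)) :=
  Ideal.span ((fun i : ℕ =>
      X ((i - 1 : ℕ) : Fin n) ^ 2 -
        (if i = 1 then 0
         else if i = n then
           (∑ j ∈ Finset.Icc 1 (n - 2), X ((j - 1 : ℕ) : Fin n)) * X ((n - 1 : ℕ) : Fin n)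
         else X ((i - 2 : ℕ) : Fin n) * X ((i - 1 : ℕ) : Fin n))) ''
    Set.Icc 1 n)

/-- The ring `R_n`. -/
abbrev Rring (n : ℕ) [NeZero n] : Type :=
  MvPolynomial (Fin n) (ZMod 2) ⧸ Rrel n

/-- The image of `x_i` (1-based, for `1 ≤ i ≤ n`) in `R_n`. -/
def xR (n : ℕ) [NeZero n] (i : ℕ) : Rring n :=
  Ideal.Quotient.mk (Rrel n) (X ((i - 1 : ℕ) : Fin n))

lemma xR_sq (n : ℕ) [NeZero n] (i : ℕ) (h1 : 2 ≤ i) (h2 : i ≤ n - 1) :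
    xR n i ^ 2 = xR n (i - 1) * xR n i := by
  have hn1 : 1 ≤ n := Nat.one_le_iff_ne_zero.mpr (NeZero.ne n)
  have hmem : (X ((i - 1 : ℕ) : Fin n) ^ 2 -
      X ((i - 2 : ℕ) : Fin n) * X ((i - 1 : ℕ) : Fin n) :
      MvPolynomial (Fin n) (ZMod 2)) ∈ Rrel n := by
    apply Ideal.subset_span
    refine ⟨i, ⟨by omega, by omega⟩, ?_⟩
    dsimp only
    rw [if_neg (show ¬ i = 1 by omega), if_neg (show ¬ i = n by omega)]
  unfold xR
  rw [← map_pow, ← map_mul, Ideal.Quotient.eq]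
  simpa [Nat.sub_sub] using hmem

lemma base_case (n : ℕ) [NeZero n] (hn : 3 ≤ n) (D : ℕ) (hD : 1 ≤ D) (hDn : D ≤ n - 2) :
    ∀ l, D ≤ l → l ≤ n - 2 →
      (∏ j ∈ Finset.Icc (D + 1) n, xR n j) * xR n l = ∏ j ∈ Finset.Icc D n, xR n j := by
  intro l hDl
  induction l, hDl using Nat.le_induction with
  | base =>
    intro _
    rw [show Finset.Icc (D + 1) n = Finset.Ioc D n from by rw [Finset.Icc_add_one_left_eq_Ioc],
      ← Finset.Ioc_insert_left (show D ≤ n by omega),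
      Finset.prod_insert (by simp)]
    ring
  | succ l hl ih =>
    intro hl1
    have hmem : l + 1 ∈ Finset.Icc (D + 1) n := by
      simp only [Finset.mem_Icc]; omega
    have hsq : xR n (l + 1) ^ 2 = xR n l * xR n (l + 1) := by
      simpa using xR_sq n (l + 1) (by omega) (by omega)
    calc (∏ j ∈ Finset.Icc (D + 1) n, xR n j) * xR n (l + 1)
        = ((∏ j ∈ (Finset.Icc (D + 1) n).erase (l + 1), xR n j) * xR n (l + 1)) * xR n (l + 1) := by
          rw [Finset.prod_erase_mul _ _ hmem]
      _ = (∏ j ∈ (Finset.Icc (D + 1) n).erase (l + 1), xR n j) * (xR n (l + 1) ^ 2) := by ring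
      _ = (∏ j ∈ (Finset.Icc (D + 1) n).erase (l + 1), xR n j) * (xR n l * xR n (l + 1)) := by
          rw [hsq]
      _ = ((∏ j ∈ (Finset.Icc (D + 1) n).erase (l + 1), xR n j) * xR n (l + 1)) * xR n l := by ring
      _ = (∏ j ∈ Finset.Icc (D + 1) n, xR n j) * xR n l := by
          rw [Finset.prod_erase_mul _ _ hmem]
      _ = ∏ j ∈ Finset.Icc D n, xR n j := ih (by omega)

lemma main_lemma (n : ℕ) [NeZero n] (hn : 3 ≤ n) :
    ∀ k D, 2 ^ k ≤ D → D ≤ n - 2 → ∀ l, D ≤ l → l ≤ n - 2 →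
      (∏ j ∈ Finset.Icc (D + 1) n, xR n j) * xR n l ^ (2 ^ k) =
        ∏ j ∈ Finset.Icc (D + 1 - 2 ^ k) n, xR n j := by
  intro k
  induction k with
  | zero =>
    intro D h1 h2 l h3 h4
    have h1' : 1 ≤ D := by simpa using h1
    simp only [pow_zero, pow_one, Nat.add_sub_cancel]
    exact base_case n hn D h1' h2 l h3 h4
  | succ k ih =>
    intro D h1 h2 l h3 h4
    have e : (2 : ℕ) ^ (k + 1) = 2 ^ k + 2 ^ k := by ring
    have h2k : 2 ^ k ≤ D := by omega
    have hD' : 2 ^ k ≤ D - 2 ^ k := by omega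
    have hA : D - 2 ^ k ≤ n - 2 := le_trans (Nat.sub_le _ _) h2
    have hB : D - 2 ^ k ≤ l := le_trans (Nat.sub_le _ _) h3
    rw [e, pow_add, ← mul_assoc, ih D h2k h2 l h3 h4,
      show D + 1 - 2 ^ k = (D - 2 ^ k) + 1 by omega,
      ih (D - 2 ^ k) hD' hA l hB h4,
      show (D - 2 ^ k) + 1 - 2 ^ k = D + 1 - (2 ^ k + 2 ^ k) by omega]

/-- From the proof of Theorem 2.8(a): in `R_n` with `2^k ≤ D ≤ n - 2`, for every
`D ≤ ℓ ≤ n - 2` one has `(x_{D+1} ⋯ x_n) ⋅ x_ℓ^{2^k} = x_{D+1-2^k} ⋯ x_n` (independent of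
`ℓ`); consequently, if `n - 1 - D` is even then
`(x_{D+1} ⋯ x_n) ⋅ (x_D^{2^k} + ⋯ + x_{n-2}^{2^k}) = 0`. -/
theorem statement18 (n : ℕ) [NeZero n] (hn : 3 ≤ n) (k D : ℕ)
    (hD1 : 1 ≤ D) (hkD : 2 ^ k ≤ D) (hDn : D ≤ n - 2) :
    (∀ l, D ≤ l → l ≤ n - 2 →
      (∏ j ∈ Finset.Icc (D + 1) n, xR n j) * xR n l ^ (2 ^ k) =
        ∏ j ∈ Finset.Icc (D + 1 - 2 ^ k) n, xR n j) ∧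
    (Even (n - 1 - D) →
      (∏ j ∈ Finset.Icc (D + 1) n, xR n j) *
        (∑ l ∈ Finset.Icc D (n - 2), xR n l ^ (2 ^ k)) = 0) := by
  refine ⟨fun l h1 h2 => main_lemma n hn k D hkD hDn l h1 h2, fun heven => ?_⟩
  have h2 : (2 : Rring n) = 0 := by
    rw [show (2 : Rring n) = algebraMap (ZMod 2) (Rring n) 2 from (map_ofNat _ 2).symm,
      show (2 : ZMod 2) = 0 by decide, map_zero]
  rw [Finset.mul_sum]
  calc ∑ l ∈ Finset.Icc D (n - 2),
        (∏ j ∈ Finset.Icc (D + 1) n, xR n j) * xR n l ^ (2 ^ k)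
      = ∑ l ∈ Finset.Icc D (n - 2), ∏ j ∈ Finset.Icc (D + 1 - 2 ^ k) n, xR n j := by
        refine Finset.sum_congr rfl fun l hl => ?_
        simp only [Finset.mem_Icc] at hl
        exact main_lemma n hn k D hkD hDn l hl.1 hl.2
    _ = (Finset.Icc D (n - 2)).card • ∏ j ∈ Finset.Icc (D + 1 - 2 ^ k) n, xR n j :=
        Finset.sum_const _
    _ = 0 := by
        obtain ⟨t, ht⟩ := heven
        rw [Nat.card_Icc, show n - 2 + 1 - D = t + t by omega, nsmul_eq_mul]
        push_cast
        rw [show (t : Rring n) + t = 2 * t by ring, h2]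
        ring
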